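/- Let X, X_1, X_2, ... be i.i.d. random vectors in ℝ^d whose common law has a density lower bounded by a constant C_input > 0 on its support, let x be in the support of X, and let k_n = ⌊n^β⌋ with 0 < β < 1. Then the k_{n+1}-th order statistic ‖X−x‖_{(k_{n+1},n)} of the sample (‖X_1−x‖,...,‖X_n−x‖) converges to 0 almost surely as n → ∞. -/

import Mathlib

open MeasureTheory ProbabilityTheory Filter Topology

/-- The `k`-th order statistic of the family `(v i)_{i ∈ s}` : the smallest `t` such that at
least `k` of the values `v i`, `i ∈ s`, are `≤ t`. -/
noncomputable def orderStat (s : Finset ℕ) (v : ℕ → ℝ) (k : ℕ) : ℝ :=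
  sInf {t : ℝ | k ≤ (s.filter (fun i => v i ≤ t)).card}

lemma orderStat_nonneg (s : Finset ℕ) (v : ℕ → ℝ) (k : ℕ) (hk : 1 ≤ k)
    (hv : ∀ i, 0 ≤ v i) : 0 ≤ orderStat s v k := by
  unfold orderStat
  rcases Set.eq_empty_or_nonempty {t : ℝ | k ≤ (s.filter (fun i => v i ≤ t)).card} with h | h
  · rw [h, Real.sInf_empty]
  · apply le_csInf h
    intro t ht
    have hcard : 0 < (s.filter (fun i => v i ≤ t)).card := lt_of_lt_of_le hk ht
    obtain ⟨i, hi⟩ := Finset.card_pos.mp hcard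
    have := (Finset.mem_filter.mp hi).2
    exact le_trans (hv i) this

lemma orderStat_le (s : Finset ℕ) (v : ℕ → ℝ) (k : ℕ) (hk : 1 ≤ k)
    (hv : ∀ i, 0 ≤ v i) (t : ℝ) (ht : k ≤ (s.filter (fun i => v i ≤ t)).card) :
    orderStat s v k ≤ t := by
  unfold orderStat
  have hbdd : BddBelow {t : ℝ | k ≤ (s.filter (fun i => v i ≤ t)).card} := by
    refine ⟨0, fun u hu => ?_⟩
    have hcard : 0 < (s.filter (fun i => v i ≤ u)).card := lt_of_lt_of_le hk hu
    obtain ⟨i, hi⟩ := Finset.card_pos.mp hcard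
    exact le_trans (hv i) (Finset.mem_filter.mp hi).2
  exact csInf_le hbdd (by exact ht)

lemma kseq_div_tendsto (β : ℝ) (hβ : 0 < β) (hβ1 : β < 1) (kseq : ℕ → ℕ)
    (hkseq : ∀ n, kseq n = ⌊(n : ℝ) ^ β⌋₊) :
    Filter.Tendsto (fun n : ℕ => (kseq (n + 1) : ℝ) / n) atTop (nhds 0) := by
  have hmain : Tendsto (fun n : ℕ => ((n : ℝ) + 1) ^ β / n) atTop (𝓝 0) := by
    have h2 : Tendsto (fun n : ℕ => (2:ℝ) ^ β * (n : ℝ) ^ (β - 1)) atTop (𝓝 0) := by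
      have h := ((tendsto_rpow_neg_atTop (y := 1 - β) (by linarith)).comp
        (tendsto_natCast_atTop_atTop (R := ℝ))).const_mul ((2:ℝ)^β)
      rw [mul_zero] at h
      convert h using 2 with n
      simp [Function.comp, neg_sub]
    apply squeeze_zero' (g := fun n : ℕ => (2:ℝ) ^ β * (n : ℝ) ^ (β - 1)) ?_ ?_ h2
    · filter_upwards [eventually_ge_atTop 1] with n hn
      have hn1 : (1:ℝ) ≤ (n:ℝ) := by exact_mod_cast hn
      positivity
    · filter_upwards [eventually_ge_atTop 1] with n hn
      have hn1 : (1:ℝ) ≤ (n:ℝ) := by exact_mod_cast hn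
      have h1 : ((n:ℝ)+1) ^ β ≤ (2*n) ^ β :=
        Real.rpow_le_rpow (by linarith) (by linarith) hβ.le
      have heq : ((2:ℝ)*n) ^ β = 2 ^ β * (n:ℝ) ^ β := Real.mul_rpow (by norm_num) (by linarith)
      have h3 : (n:ℝ) ^ β / n = (n:ℝ) ^ (β - 1) := by
        rw [Real.rpow_sub (by linarith), Real.rpow_one]
      calc ((n:ℝ)+1) ^ β / n ≤ 2 ^ β * (n:ℝ) ^ β / n := by
            apply div_le_div_of_nonneg_right ?_ (by linarith)
            rw [← heq]; exact h1
        _ = 2 ^ β * (n:ℝ) ^ (β - 1) := by rw [mul_div_assoc, h3]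
  apply squeeze_zero' ?_ ?_ hmain
  · filter_upwards [eventually_ge_atTop 1] with n hn
    have hn1 : (1:ℝ) ≤ (n:ℝ) := by exact_mod_cast hn
    positivity
  · filter_upwards [eventually_ge_atTop 1] with n hn
    have hn1 : (1:ℝ) ≤ (n:ℝ) := by exact_mod_cast hn
    apply div_le_div_of_nonneg_right ?_ (by linarith)
    rw [hkseq]
    have : ((n:ℝ)+1) = ((n+1 : ℕ) : ℝ) := by push_cast; ring
    rw [this]
    exact Nat.floor_le (Real.rpow_nonneg (by positivity) β)

/-- **Almost sure convergence of the `k_{n+1}`-th nearest-neighbour distance** (Lemma `ps`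
in the paper). If `X, X₁, X₂, …` are i.i.d. random vectors of `ℝ^d` whose common law has a
density lower bounded by `C_input > 0` on its support, `x` is in the support of the law of
`X`, and `k_n = ⌊n^β⌋` with `0 < β < 1`, then `‖X-x‖_{(k_{n+1},n)} → 0` almost surely. -/
theorem nearest_neighbour_distance_tendsto_zero
    {Ω : Type*} [MeasurableSpace Ω] (P : Measure Ω) [IsProbabilityMeasure P]
    (d : ℕ) (Xs : ℕ → Ω → EuclideanSpace ℝ (Fin d))
    (μ : Measure (EuclideanSpace ℝ (Fin d))) [IsProbabilityMeasure μ]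
    (hXsmeas : ∀ i, Measurable (Xs i))
    (hlawXs : ∀ i, Measure.map (Xs i) P = μ)
    (hindep : iIndepFun Xs P)
    (f : EuclideanSpace ℝ (Fin d) → ℝ) (Cinput : ℝ) (hCinput : 0 < Cinput)
    (hdensity : μ = MeasureTheory.volume.withDensity (fun z => ENNReal.ofReal (f z)))
    (hlower : ∀ z, f z ≠ 0 → Cinput ≤ f z)
    (x : EuclideanSpace ℝ (Fin d))
    (hx : ∀ u : ℝ, 0 < u → 0 < μ (Metric.ball x u))
    (β : ℝ) (hβ : 0 < β) (hβ1 : β < 1)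
    (kseq : ℕ → ℕ) (hkseq : ∀ n, kseq n = ⌊(n : ℝ) ^ β⌋₊) :
    ∀ᵐ ω ∂P, Tendsto
      (fun n => orderStat (Finset.Icc 1 n) (fun i => ‖Xs i ω - x‖) (kseq (n + 1)))
      atTop (nhds 0) := by
  -- `kseq (n+1) ≥ 1` for all `n`
  have hk1 : ∀ n : ℕ, 1 ≤ kseq (n + 1) := by
    intro n
    rw [hkseq]
    apply Nat.le_floor
    push_cast
    calc (1:ℝ) = 1 ^ β := (Real.one_rpow β).symm
      _ ≤ ((n:ℝ)+1) ^ β := Real.rpow_le_rpow (by norm_num) (by push_cast; linarith [Nat.cast_nonneg (α := ℝ) n]) hβ.le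
  have hdet := kseq_div_tendsto β hβ hβ1 kseq hkseq
  -- Key step : for each ε > 0, a.s. eventually `kseq (n+1) ≤ #{i ∈ [1,n] : ‖Xs i - x‖ ≤ ε}`.
  have key : ∀ ε : ℝ, 0 < ε → ∀ᵐ ω ∂P, ∀ᶠ n in atTop,
      kseq (n + 1) ≤ ((Finset.Icc 1 n).filter (fun i => ‖Xs i ω - x‖ ≤ ε)).card := by
    intro ε hε
    set s : Set (EuclideanSpace ℝ (Fin d)) := Metric.closedBall x ε with hs
    have hsm : MeasurableSet s := Metric.isClosed_closedBall.measurableSet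
    set g : EuclideanSpace ℝ (Fin d) → ℝ := s.indicator (fun _ => (1:ℝ)) with hg
    have hgmeas : Measurable g := (measurable_const).indicator hsm
    set Z : ℕ → Ω → ℝ := fun i ω => g (Xs (i + 1) ω) with hZ
    have hint : Integrable (Z 0) P := by
      have hgint : Integrable g μ := by
        rw [hg, integrable_indicator_iff hsm]
        exact integrableOn_const (measure_lt_top μ s).ne
      rw [← hlawXs 1] at hgint
      exact (integrable_map_measure hgmeas.aestronglyMeasurable
        (hXsmeas 1).aemeasurable).mp hgint
    have hpair : Pairwise (Function.onFun (IndepFun · · P) Z) := by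
      intro i j hij
      exact (hindep.indepFun (show i + 1 ≠ j + 1 by omega)).comp hgmeas hgmeas
    have hident : ∀ i, IdentDistrib (Z i) (Z 0) P P := by
      intro i
      exact IdentDistrib.comp ⟨(hXsmeas _).aemeasurable, (hXsmeas _).aemeasurable,
        by rw [hlawXs, hlawXs]⟩ hgmeas
    have hslln := strong_law_ae_real Z hint hpair hident
    -- the mean is `(μ s).toReal > 0`
    have hmean : P[Z 0] = (μ s).toReal := by
      show ∫ ω, g (Xs (0+1) ω) ∂P = (μ s).toReal
      rw [← integral_map (hXsmeas 1).aemeasurable hgmeas.aestronglyMeasurable, hlawXs,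
        hg, integral_indicator_const _ hsm]
      simp
      rfl
    have hp : 0 < (μ s).toReal := by
      apply ENNReal.toReal_pos ?_ (measure_ne_top μ s)
      exact (lt_of_lt_of_le (hx ε hε) (measure_mono Metric.ball_subset_closedBall)).ne'
    rw [hmean] at hslln
    filter_upwards [hslln] with ω hω
    -- identify the sum with the cardinality
    have hcount : ∀ n : ℕ, (∑ i ∈ Finset.range n, Z i ω) =
        (((Finset.Icc 1 n).filter (fun i => ‖Xs i ω - x‖ ≤ ε)).card : ℝ) := by
      intro n
      have h1 : ∀ i : ℕ, Z i ω = if ‖Xs (i+1) ω - x‖ ≤ ε then (1:ℝ) else 0 := by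
        intro i
        show g (Xs (i+1) ω) = _
        have hmem' : Xs (i+1) ω ∈ s ↔ ‖Xs (i+1) ω - x‖ ≤ ε := by
          rw [hs, Metric.mem_closedBall, dist_eq_norm]
        by_cases hc : ‖Xs (i+1) ω - x‖ ≤ ε
        · rw [if_pos hc, hg, Set.indicator_of_mem (hmem'.mpr hc)]
        · rw [if_neg hc, hg, Set.indicator_of_notMem (fun h => hc (hmem'.mp h))]
      have h2 : (∑ i ∈ Finset.range n, Z i ω) =
          ∑ i ∈ Finset.Icc 1 n, (if ‖Xs i ω - x‖ ≤ ε then (1:ℝ) else 0) := by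
        rw [← Finset.Ico_add_one_right_eq_Icc, Finset.sum_Ico_eq_sum_range]
        simp only [Nat.add_sub_cancel]
        apply Finset.sum_congr rfl
        intro i _
        rw [h1, add_comm 1 i]
      rw [h2, Finset.sum_boole]
    have hdiff : Tendsto (fun n : ℕ =>
        ((((Finset.Icc 1 n).filter (fun i => ‖Xs i ω - x‖ ≤ ε)).card : ℝ) / n
          - (kseq (n+1) : ℝ) / n)) atTop (𝓝 ((μ s).toReal - 0)) := by
      apply Tendsto.sub ?_ hdet
      convert hω using 2 with n
      rw [hcount]
    rw [sub_zero] at hdiff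
    filter_upwards [hdiff.eventually (eventually_gt_nhds hp), eventually_ge_atTop 1]
      with n hn hn1
    have hnpos : (0:ℝ) < n := by exact_mod_cast hn1
    have : (kseq (n+1) : ℝ) / n <
        (((Finset.Icc 1 n).filter (fun i => ‖Xs i ω - x‖ ≤ ε)).card : ℝ) / n := by linarith
    have := (div_lt_div_iff_of_pos_right hnpos).mp this
    exact_mod_cast this.le
  -- Combine over a countable family of ε's and conclude.
  have keyall : ∀ᵐ ω ∂P, ∀ m : ℕ, ∀ᶠ n in atTop,
      kseq (n + 1) ≤ ((Finset.Icc 1 n).filter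
        (fun i => ‖Xs i ω - x‖ ≤ 1 / (m + 1))).card :=
    ae_all_iff.mpr (fun m => key (1/(m+1)) (by positivity))
  filter_upwards [keyall] with ω hω
  rw [Metric.tendsto_atTop]
  intro ε hε
  obtain ⟨m, hm⟩ := exists_nat_one_div_lt hε
  obtain ⟨N, hN⟩ := (eventually_atTop).mp (hω m)
  refine ⟨N, fun n hn => ?_⟩
  have hnonneg : 0 ≤ orderStat (Finset.Icc 1 n) (fun i => ‖Xs i ω - x‖) (kseq (n+1)) :=
    orderStat_nonneg _ _ _ (hk1 n) (fun i => norm_nonneg _)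
  have hle : orderStat (Finset.Icc 1 n) (fun i => ‖Xs i ω - x‖) (kseq (n+1)) ≤ 1/(m+1) :=
    orderStat_le _ _ _ (hk1 n) (fun i => norm_nonneg _) _ (hN n hn)
  rw [Real.dist_eq, sub_zero, abs_of_nonneg hnonneg]
  calc orderStat (Finset.Icc 1 n) (fun i => ‖Xs i ω - x‖) (kseq (n+1))
      ≤ 1/(m+1) := hle
    _ < ε := hm
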